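/- arXiv:2207.02821 — 8 statements merged into one kernel-verified Lean document; each statement's English description precedes it below -/
import Mathlib

section
/- For every integer p ≥ 3, every q ∈ [(p-2)/p, 1] and every r ∈ [0,1], it holds that ((1 + r(1-q)/q)^(p-1) - 1) / ((p-1) r (1-q)/q) ≤ 1/(1-r). (For r = 0 interpret the left side as its limit, which equals 1.) -/
lemma aux_pow_bound (x : ℝ) (hx : 0 ≤ x) :
    ∀ n : ℕ, (n : ℝ) * x < 2 →
      (1 + x) ^ (n + 1) - 1 ≤ ((n : ℝ) + 1) * x / (1 - (n : ℝ) * x / 2) := by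
  intro n
  induction n with
  | zero => intro _; simp
  | succ n ih =>
    intro h
    have hxn : (n : ℝ) * x ≤ ((n : ℝ) + 1) * x := by nlinarith
    have hcast : ((n + 1 : ℕ) : ℝ) = (n : ℝ) + 1 := by push_cast; ring
    rw [hcast] at h ⊢
    have hn : (n : ℝ) * x < 2 := lt_of_le_of_lt hxn h
    have hA : 0 < 1 - (n : ℝ) * x / 2 := by linarith
    have hB : 0 < 1 - ((n : ℝ) + 1) * x / 2 := by linarith
    have IH := ih hn
    have h1x : (0:ℝ) < 1 + x := by linarith
    have step : (1 + x) ^ (n + 1 + 1) ≤ (1 + x) * (1 + ((n : ℝ) + 1) * x / (1 - (n : ℝ) * x / 2)) := by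
      have : (1 + x) ^ (n + 1) ≤ 1 + ((n : ℝ) + 1) * x / (1 - (n : ℝ) * x / 2) := by linarith
      calc (1 + x) ^ (n + 1 + 1) = (1 + x) * (1 + x) ^ (n + 1) := by ring
        _ ≤ (1 + x) * (1 + ((n : ℝ) + 1) * x / (1 - (n : ℝ) * x / 2)) := by
            exact mul_le_mul_of_nonneg_left this (le_of_lt h1x)
    have key : (1 + x) * (1 + ((n : ℝ) + 1) * x / (1 - (n : ℝ) * x / 2)) - 1
        ≤ ((n : ℝ) + 1 + 1) * x / (1 - ((n : ℝ) + 1) * x / 2) := by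
      rw [le_div_iff₀ hB]
      have ht : ((n : ℝ) + 1) * x / (1 - (n : ℝ) * x / 2) * (1 - (n : ℝ) * x / 2)
          = ((n : ℝ) + 1) * x := div_mul_cancel₀ _ (ne_of_gt hA)
      have hEB : ((1 + x) * (1 + ((n : ℝ) + 1) * x / (1 - (n : ℝ) * x / 2)) - 1)
            * (1 - ((n : ℝ) + 1) * x / 2) * (1 - (n : ℝ) * x / 2)
          = (x * (1 - (n : ℝ) * x / 2) + (1 + x) * (((n : ℝ) + 1) * x))
            * (1 - ((n : ℝ) + 1) * x / 2) := by
        linear_combination ((1 + x) * (1 - ((n : ℝ) + 1) * x / 2)) * ht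
      have hc : (0:ℝ) ≤ x ^ 3 * ((n : ℝ) + 1) * ((n : ℝ) + 2) / 4 := by positivity
      have idq : ((n : ℝ) + 1 + 1) * x * (1 - (n : ℝ) * x / 2)
            - (x * (1 - (n : ℝ) * x / 2) + (1 + x) * (((n : ℝ) + 1) * x))
              * (1 - ((n : ℝ) + 1) * x / 2)
          = x ^ 3 * ((n : ℝ) + 1) * ((n : ℝ) + 2) / 4 := by ring
      have poly : (x * (1 - (n : ℝ) * x / 2) + (1 + x) * (((n : ℝ) + 1) * x))
            * (1 - ((n : ℝ) + 1) * x / 2)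
          ≤ ((n : ℝ) + 1 + 1) * x * (1 - (n : ℝ) * x / 2) := by linarith
      exact le_of_mul_le_mul_right (by linarith) hA
    linarith
  
theorem stmt_0 (p : ℕ) (hp : 3 ≤ p) (q r : ℝ)
    (hq0 : 0 < q) (hql : ((p : ℝ) - 2) / p ≤ q) (hqu : q ≤ 1)
    (hr0 : 0 < r) (hr1 : r < 1) :
    ((1 + r * (1 - q) / q) ^ (p - 1) - 1) / (((p : ℝ) - 1) * r * (1 - q) / q)
      ≤ 1 / (1 - r) := by
  obtain ⟨m, rfl⟩ : ∃ m, p = m + 3 := ⟨p - 3, by omega⟩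
  have hpc : ((m + 3 : ℕ) : ℝ) = (m : ℝ) + 3 := by push_cast; ring
  have hpe : m + 3 - 1 = m + 2 := by omega
  rw [hpc, hpe]
  set x := r * (1 - q) / q with hxdef
  have hrpos : (0:ℝ) < 1 - r := by linarith
  have hx : 0 ≤ x := by
    apply div_nonneg _ (le_of_lt hq0)
    nlinarith
  rcases eq_or_lt_of_le hx with hx0 | hxpos
  · -- x = 0
    have hnum : (1 + x) ^ (m + 2) - 1 = 0 := by rw [← hx0]; simp
    have hden : ((m : ℝ) + 3 - 1) * r * (1 - q) / q = ((m : ℝ) + 2) * x := by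
      rw [hxdef]; ring
    rw [hden, hnum, ← hx0, mul_zero, div_zero]
    positivity
  · -- x > 0
    have hq1 : 0 < (m : ℝ) + 1 := by positivity
    have hq3 : 0 < (m : ℝ) + 3 := by positivity
    -- from hql : ((m:ℝ)+3-2)/((m:ℝ)+3) ≤ q, i.e. (m+1)/(m+3) ≤ q
    have hql' : ((m : ℝ) + 1) / ((m : ℝ) + 3) ≤ q := by
      rw [hpc] at hql
      have : ((m : ℝ) + 3 - 2) = (m : ℝ) + 1 := by ring
      rwa [this] at hql
    -- (1-q)/q ≤ 2/(m+1)
    have hratio : (1 - q) / q ≤ 2 / ((m : ℝ) + 1) := by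
      rw [div_le_div_iff₀ hq0 hq1]
      rw [div_le_iff₀ hq3] at hql'
      nlinarith
    have hxle : ((m : ℝ) + 1) * x ≤ 2 * r := by
      have : x ≤ r * (2 / ((m : ℝ) + 1)) := by
        rw [hxdef, mul_div_assoc]
        exact mul_le_mul_of_nonneg_left hratio (le_of_lt hr0)
      calc ((m : ℝ) + 1) * x ≤ ((m : ℝ) + 1) * (r * (2 / ((m : ℝ) + 1))) :=
            mul_le_mul_of_nonneg_left this (le_of_lt hq1)
        _ = 2 * r := by field_simp
    have h2 : ((m + 1 : ℕ) : ℝ) * x < 2 := by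
      push_cast
      nlinarith
    have key := aux_pow_bound x hx (m + 1) h2
    push_cast at key
    have hD : 0 < 1 - ((m : ℝ) + 1) * x / 2 := by nlinarith
    have hDr : 1 - r ≤ 1 - ((m : ℝ) + 1) * x / 2 := by nlinarith
    have hden : ((m : ℝ) + 3 - 1) * r * (1 - q) / q = ((m : ℝ) + 2) * x := by
      rw [hxdef]; ring
    rw [hden]
    have hcx : 0 < ((m : ℝ) + 2) * x := by positivity
    have hexp : m + 1 + 1 = m + 2 := by omega
    rw [hexp] at key
    have key2 : ((m : ℝ) + 1 + 1) = ((m : ℝ) + 2) := by ring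
    rw [key2] at key
    calc ((1 + x) ^ (m + 2) - 1) / (((m : ℝ) + 2) * x)
        ≤ (((m : ℝ) + 2) * x / (1 - ((m : ℝ) + 1) * x / 2)) / (((m : ℝ) + 2) * x) := by
          exact (div_le_div_iff_of_pos_right hcx).mpr key
      _ = 1 / (1 - ((m : ℝ) + 1) * x / 2) := by
          rw [div_right_comm, div_self (ne_of_gt hcx)]
      _ ≤ 1 / (1 - r) := by
          apply one_div_le_one_div_of_le hrpos hDr
end

section
/- Let p ≥ 3 be an integer and β ≥ 0. Define A(0,β) = sup_{r ∈ (0,1)} ( β² · p r^{p-1} / r − 1/(1−r) ). Then A(0,β) ≤ 0 if and only if β ≤ β_d, where β_d = sqrt( (p−1)^{p−1} / ( p (p−2)^{p−2} ) ). -/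
lemma aux2 (n : ℕ) : ∀ a b : ℝ, 0 ≤ a → 0 ≤ b →
    ((n:ℝ)+1) * a^n * b ≤ (n:ℝ) * a^(n+1) + b^(n+1) := by
  induction n with
  | zero => intro a b ha hb; simp
  | succ n ih =>
    intro a b ha hb
    have h1 := mul_le_mul_of_nonneg_left (ih a b ha hb) ha
    have h2 : 0 ≤ (a - b) * (a^(n+1) - b^(n+1)) := by
      rcases le_total a b with h | h
      · have := pow_le_pow_left₀ ha h (n+1)
        nlinarith
      · have := pow_le_pow_left₀ hb h (n+1)
        nlinarith
    have e1 : a * (((n:ℝ) + 1) * a ^ n * b) = ((n:ℝ)+1) * a^(n+1) * b := by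
      rw [pow_succ]; ring
    have e2 : a * ((n:ℝ) * a ^ (n + 1) + b ^ (n + 1)) = (n:ℝ) * a^(n+2) + a*b^(n+1) := by
      rw [pow_succ a (n+1)]; ring
    have e3 : (a - b) * (a^(n+1) - b^(n+1)) = a^(n+2) - a*b^(n+1) - a^(n+1)*b + b^(n+2) := by
      rw [pow_succ a (n+1), pow_succ b (n+1)]; ring
    rw [e1, e2] at h1
    rw [e3] at h2
    push_cast
    show ((n:ℝ) + 1 + 1) * a ^ (n + 1) * b ≤ ((n:ℝ) + 1) * a ^ (n + 2) + b ^ (n + 2)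
    linarith

lemma key (n : ℕ) (hn : 1 ≤ n) (r : ℝ) (hr0 : 0 ≤ r) :
    ((n:ℝ)+1)^(n+1) * (r^n * (1-r)) ≤ (n:ℝ)^n := by
  have hN : (0:ℝ) < n := by exact_mod_cast hn
  have h := aux2 n (((n:ℝ)+1)*r) n (by positivity) (by positivity)
  rw [mul_pow, mul_pow] at h
  have : (n:ℝ) * (((n:ℝ)+1)^(n+1) * (r^n * (1-r))) ≤ (n:ℝ) * (n:ℝ)^n := by
    rw [pow_succ ((n:ℝ)+1) n] at h ⊢
    rw [pow_succ r n, pow_succ (n:ℝ) n] at h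
    nlinarith [h]
  exact le_of_mul_le_mul_left this hN

theorem stmt_1 (p : ℕ) (hp : 3 ≤ p) (β : ℝ) (hβ : 0 ≤ β) :
    (∀ r ∈ Set.Ioo (0 : ℝ) 1,
        β ^ 2 * ((p : ℝ) * r ^ (p - 1)) / r - 1 / (1 - r) ≤ 0)
      ↔ β ≤ Real.sqrt (((p : ℝ) - 1) ^ (p - 1) / ((p : ℝ) * ((p : ℝ) - 2) ^ (p - 2))) := by
  obtain ⟨n, rfl⟩ : ∃ n, p = n + 2 := ⟨p - 2, by omega⟩
  have hn : 1 ≤ n := by omega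
  have hN : (0:ℝ) < n := by exact_mod_cast hn
  have hcast : ((n + 2 : ℕ) : ℝ) = (n:ℝ) + 2 := by push_cast; ring
  have hsub1 : n + 2 - 1 = n + 1 := by omega
  have hsub2 : n + 2 - 2 = n := by omega
  rw [hcast, hsub1, hsub2]
  have hC1 : ((n:ℝ) + 2 - 1) = (n:ℝ) + 1 := by ring
  have hC2 : ((n:ℝ) + 2 - 2) = (n:ℝ) := by ring
  rw [hC1, hC2]
  set C : ℝ := ((n:ℝ)+1)^(n+1) / (((n:ℝ)+2) * (n:ℝ)^n) with hCdef
  have hCpos : 0 < C := by positivity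
  have hsqrt : β ≤ Real.sqrt C ↔ β ^ 2 ≤ C := Real.le_sqrt hβ hCpos.le
  rw [hsqrt]
  constructor
  · intro h
    -- evaluate at r₀ = n/(n+1)
    set r₀ : ℝ := (n:ℝ) / ((n:ℝ)+1) with hr₀
    have hden : (0:ℝ) < (n:ℝ)+1 := by positivity
    have hr₀mem : r₀ ∈ Set.Ioo (0:ℝ) 1 := by
      constructor
      · positivity
      · rw [div_lt_one hden]; linarith
    have h0 := h r₀ hr₀mem
    have hr₀pos : 0 < r₀ := hr₀mem.1
    have h1r : 1 - r₀ = 1 / ((n:ℝ)+1) := by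
      rw [hr₀, eq_div_iff hden.ne']
      field_simp
      ring
    rw [h1r] at h0
    have hpow : r₀ ^ (n+1) / r₀ = r₀ ^ n := by
      rw [pow_succ, mul_div_assoc, div_self hr₀pos.ne', mul_one]
    have h2 : β ^ 2 * (((n:ℝ)+2) * r₀ ^ n) ≤ (n:ℝ)+1 := by
      have : β ^ 2 * (((n:ℝ)+2) * r₀ ^ (n+1)) / r₀ = β ^ 2 * (((n:ℝ)+2) * (r₀ ^ (n+1) / r₀)) := by
        ring
      rw [this, hpow] at h0
      have : 1 / (1 / ((n:ℝ)+1)) = (n:ℝ)+1 := by field_simp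
      linarith [h0, this.le, this.ge]
    have hr₀pow : r₀ ^ n = (n:ℝ)^n / ((n:ℝ)+1)^n := by
      rw [hr₀, div_pow]
    rw [hr₀pow] at h2
    rw [hCdef, le_div_iff₀ (by positivity)]
    have hne : ((n:ℝ)+1)^n ≠ 0 := by positivity
    calc β ^ 2 * (((n:ℝ)+2) * (n:ℝ)^n)
        = (β ^ 2 * (((n:ℝ)+2) * ((n:ℝ)^n / ((n:ℝ)+1)^n))) * ((n:ℝ)+1)^n := by
          field_simp
      _ ≤ ((n:ℝ)+1) * ((n:ℝ)+1)^n := by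
          apply mul_le_mul_of_nonneg_right h2 (by positivity)
      _ = ((n:ℝ)+1)^(n+1) := by rw [pow_succ]; ring
  · intro hβ2 r hr
    obtain ⟨hr0, hr1⟩ := hr
    have hpow : r ^ (n+1) / r = r ^ n := by
      rw [pow_succ, mul_div_assoc, div_self hr0.ne', mul_one]
    have heq : β ^ 2 * (((n:ℝ)+2) * r ^ (n+1)) / r = β ^ 2 * (((n:ℝ)+2) * (r ^ (n+1) / r)) := by
      ring
    rw [heq, hpow]
    rw [sub_nonpos]
    have hkey := key n hn r hr0.le
    have hrn : 0 ≤ r ^ n * (1 - r) := by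
      apply mul_nonneg (by positivity); linarith
    have hstep : β ^ 2 * (((n:ℝ)+2) * r ^ n) * (1 - r) ≤ 1 := by
      have hb2 : β ^ 2 * (((n:ℝ)+2) * (r ^ n * (1-r))) ≤ C * (((n:ℝ)+2) * (r ^ n * (1-r))) := by
        apply mul_le_mul_of_nonneg_right hβ2 (by positivity)
      have hc : C * (((n:ℝ)+2) * (r ^ n * (1-r))) ≤ 1 := by
        rw [hCdef, div_mul_eq_mul_div, div_le_one (by positivity)]
        calc ((n:ℝ)+1)^(n+1) * (((n:ℝ)+2) * (r ^ n * (1-r)))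
            = ((n:ℝ)+2) * (((n:ℝ)+1)^(n+1) * (r ^ n * (1-r))) := by ring
          _ ≤ ((n:ℝ)+2) * (n:ℝ)^n := by
              apply mul_le_mul_of_nonneg_left hkey (by positivity)
      calc β ^ 2 * (((n:ℝ)+2) * r ^ n) * (1 - r)
          = β ^ 2 * (((n:ℝ)+2) * (r ^ n * (1-r))) := by ring
        _ ≤ 1 := le_trans hb2 hc
    rw [le_div_iff₀ (by linarith)]
    linarith
end

section
/- Let p ≥ 3, β > 0, E ∈ ℝ, and define f(E,q) = β q^{p/2} E + (1/2) log(1−q) + (β²/2)(1 − p(1−q)q^{p−1} − q^p) for q ∈ (0,1). Then for all q ∈ (0,1), ∂_q f(E,q) = (sqrt(2)β₂(q)/(1−q)) · ( E/E_∞ − (1/2)(1/(sqrt(2)β₂(q)) + sqrt(2)β₂(q)) ), where β₂(q) = β sqrt(p(p−1)/2)(1−q)q^{(p−2)/2} and E_∞ = 2 sqrt(p−1)/sqrt(p). -/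
theorem stmt_8 (p : ℕ) (hp : 3 ≤ p) (β E : ℝ) (hβ : 0 < β)
    (f : ℝ → ℝ)
    (hf : ∀ q, f q = β * q ^ ((p : ℝ) / 2) * E + (1 / 2) * Real.log (1 - q)
        + β ^ 2 / 2 * (1 - (p : ℝ) * (1 - q) * q ^ (p - 1) - q ^ p))
    (β₂ : ℝ → ℝ)
    (hβ₂ : ∀ q, β₂ q = β * Real.sqrt ((p : ℝ) * ((p : ℝ) - 1) / 2) * (1 - q)
        * q ^ (((p : ℝ) - 2) / 2))
    (Einf : ℝ) (hEinf : Einf = 2 * Real.sqrt (((p : ℝ) - 1) / p)) :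
    ∀ q ∈ Set.Ioo (0 : ℝ) 1,
      HasDerivAt f
        (Real.sqrt 2 * β₂ q / (1 - q)
          * (E / Einf - (1 / 2) * (1 / (Real.sqrt 2 * β₂ q) + Real.sqrt 2 * β₂ q))) q := by
  have hfe : f = fun q => β * q ^ ((p : ℝ) / 2) * E + (1 / 2) * Real.log (1 - q)
        + β ^ 2 / 2 * (1 - (p : ℝ) * (1 - q) * q ^ (p - 1) - q ^ p) := funext hf
  rintro q ⟨hq0, hq1⟩
  have hq1' : (0:ℝ) < 1 - q := by linarith
  rw [hfe, hβ₂, hEinf]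
  -- derivative pieces
  have h1 : HasDerivAt (fun x : ℝ => β * x ^ ((p : ℝ) / 2) * E)
      (β * ((p : ℝ) / 2 * q ^ ((p : ℝ) / 2 - 1)) * E) q :=
    ((Real.hasDerivAt_rpow_const (Or.inl hq0.ne')).const_mul β).mul_const E
  have h2 : HasDerivAt (fun x : ℝ => (1/2 : ℝ) * Real.log (1 - x))
      ((1/2 : ℝ) * ((0 - 1) / (1 - q))) q :=
    (((hasDerivAt_const q (1:ℝ)).sub (hasDerivAt_id q)).log hq1'.ne').const_mul _
  have h3 : HasDerivAt (fun x : ℝ => β ^ 2 / 2 * (1 - (p : ℝ) * (1 - x) * x ^ (p - 1) - x ^ p))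
      (β ^ 2 / 2 * (0 - ((p : ℝ) * (0 - 1) * q ^ (p - 1)
        + (p : ℝ) * (1 - q) * (((p:ℕ) - 1 : ℕ) * q ^ (p - 1 - 1)))
        - (p : ℝ) * q ^ (p - 1))) q := by
    have hq : HasDerivAt (fun x : ℝ => (p : ℝ) * (1 - x) * x ^ (p - 1))
        ((p : ℝ) * (0 - 1) * q ^ (p - 1) + (p : ℝ) * (1 - q) * (((p:ℕ) - 1 : ℕ) * q ^ (p - 1 - 1))) q := by
      exact (((hasDerivAt_const q (1:ℝ)).sub (hasDerivAt_id q)).const_mul (p:ℝ)).mul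
        (hasDerivAt_pow (p-1) q)
    have hqp : HasDerivAt (fun x : ℝ => x ^ p) ((p : ℝ) * q ^ (p - 1)) q := hasDerivAt_pow p q
    exact (((hasDerivAt_const q (1:ℝ)).sub hq).sub hqp).const_mul _
  have hD := (h1.add h2).add h3
  convert hD using 1
  · rfl
  · rfl
  · rfl
  -- now purely algebraic identity
  set t : ℝ := q ^ (((p:ℝ) - 2) / 2) with ht
  have hP3 : (3:ℝ) ≤ (p:ℝ) := by exact_mod_cast hp
  have hPpos : (0:ℝ) < (p:ℝ) := by linarith
  have ht0 : 0 < t := Real.rpow_pos_of_pos hq0 _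
  have hrpow1 : q ^ ((p:ℝ)/2 - 1) = t := by rw [ht]; ring_nf
  have hA : Real.sqrt 2 * Real.sqrt ((p : ℝ) * ((p : ℝ) - 1) / 2)
      = Real.sqrt ((p : ℝ) * ((p : ℝ) - 1)) := by
    rw [← Real.sqrt_mul (by norm_num)]
    ring_nf
  set A := Real.sqrt ((p : ℝ) * ((p : ℝ) - 1)) with hAdef
  set B := Real.sqrt (((p : ℝ) - 1) / p) with hBdef
  have hApos : 0 < A := Real.sqrt_pos.2 (by nlinarith)
  have hBpos : 0 < B := Real.sqrt_pos.2 (by apply div_pos <;> linarith)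
  have hAB : A = (p:ℝ) * B := by
    rw [hAdef, hBdef, ← Real.sqrt_sq hPpos.le, ← Real.sqrt_mul (by positivity)]
    congr 1
    field_simp
    rw [Real.sqrt_sq hPpos.le]
  have hA2 : A ^ 2 = (p:ℝ) * ((p:ℝ) - 1) := Real.sq_sqrt (by nlinarith)
  have ht2 : t * t = q ^ (p - 2) := by
    rw [ht, ← Real.rpow_add hq0]
    rw [show ((p:ℝ) - 2)/2 + ((p:ℝ) - 2)/2 = (p:ℝ) - 2 by ring]
    rw [show ((p:ℝ) - 2) = ((p - 2 : ℕ) : ℝ) by push_cast [Nat.cast_sub (by omega : 2 ≤ p)]; ring]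
    exact Real.rpow_natCast q (p - 2)
  have hc1 : ((p - 1 : ℕ) : ℝ) = (p:ℝ) - 1 := by push_cast [Nat.cast_sub (by omega : 1 ≤ p)]; ring
  have he1 : q ^ (p - 1) = q ^ (p - 2) * q := by
    rw [← pow_succ]; congr 1; omega
  have he2 : p - 1 - 1 = p - 2 := by omega
  have key : Real.sqrt 2 * (β * Real.sqrt ((p : ℝ) * ((p : ℝ) - 1) / 2) * (1 - q) * t)
      = β * ((p:ℝ) * B) * (1 - q) * t := by
    rw [show Real.sqrt 2 * (β * Real.sqrt ((p : ℝ) * ((p : ℝ) - 1) / 2) * (1 - q) * t)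
        = β * (Real.sqrt 2 * Real.sqrt ((p : ℝ) * ((p : ℝ) - 1) / 2)) * ((1 - q) * t) from by
      ring, hA, hAB]
    ring
  rw [key, hrpow1, he2, hc1, he1]
  have hB2 : B ^ 2 = ((p:ℝ) - 1) / (p:ℝ)  := Real.sq_sqrt (div_nonneg (by linarith) hPpos.le)
  have hne1 : (1:ℝ) - q ≠ 0 := hq1'.ne'
  have hneB : B ≠ 0 := hBpos.ne'
  have hnet : t ≠ 0 := ht0.ne'
  have hneβ : β ≠ 0 := hβ.ne'
  have hneP : (p:ℝ) ≠ 0 := hPpos.ne'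
  trans (β*(p:ℝ)*t*E/2 - 1/(2*(1-q)) - β^2*(p:ℝ)^2*(((p:ℝ)-1)/(p:ℝ))*(q^(p-2))*(1-q)/2)
  · rw [← hB2, ← ht2]
    field_simp
    ring
  · field_simp
    ring
end

section
/- With f, β₂, E_∞ as above, for q ∈ (0,1) the equation ∂_q f(E,q) = 0 holds if and only if E/E_∞ = (1/2)( 1/(sqrt(2)β₂(q)) + sqrt(2)β₂(q) ). -/
set_option maxHeartbeats 1000000 in
theorem stmt_9 (p : ℕ) (hp : 3 ≤ p) (β E : ℝ) (hβ : 0 < β)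
    (f : ℝ → ℝ)
    (hf : ∀ q, f q = β * q ^ ((p : ℝ) / 2) * E + (1 / 2) * Real.log (1 - q)
        + β ^ 2 / 2 * (1 - (p : ℝ) * (1 - q) * q ^ (p - 1) - q ^ p))
    (β₂ : ℝ → ℝ)
    (hβ₂ : ∀ q, β₂ q = β * Real.sqrt ((p : ℝ) * ((p : ℝ) - 1) / 2) * (1 - q)
        * q ^ (((p : ℝ) - 2) / 2))
    (Einf : ℝ) (hEinf : Einf = 2 * Real.sqrt (((p : ℝ) - 1) / p))
    (q : ℝ) (hq : q ∈ Set.Ioo (0 : ℝ) 1) :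
    deriv f q = 0 ↔
      E / Einf = (1 / 2) * (1 / (Real.sqrt 2 * β₂ q) + Real.sqrt 2 * β₂ q) := by
  obtain ⟨hq0, hq1⟩ := hq
  have h1q : (0:ℝ) < 1 - q := by linarith
  have hp3 : (3:ℝ) ≤ (p:ℝ) := by exact_mod_cast hp
  have hppos : (0:ℝ) < (p:ℝ) := by linarith
  set c : ℝ := q ^ (((p:ℝ) - 2)/2) with hc
  have hcpos : 0 < c := Real.rpow_pos_of_pos hq0 _
  set s : ℝ := Real.sqrt ((p:ℝ) * ((p:ℝ) - 1)) with hs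
  have hs2 : s^2 = (p:ℝ) * ((p:ℝ)-1) := Real.sq_sqrt (by nlinarith)
  have hspos : 0 < s := Real.sqrt_pos.mpr (by nlinarith)
  set A : ℝ := β * (1 - q) * c with hA
  have hApos : 0 < A := by positivity
  -- derivative computation
  have h1 : HasDerivAt (fun x : ℝ => β * x ^ ((p:ℝ)/2) * E)
      (β * ((p:ℝ)/2 * q ^ ((p:ℝ)/2 - 1)) * E) q :=
    ((Real.hasDerivAt_rpow_const (Or.inl (ne_of_gt hq0))).const_mul β).mul_const E
  have hin : HasDerivAt (fun x : ℝ => 1 - x) (-1) q := by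
    simpa using (hasDerivAt_id q).const_sub 1
  have h2 : HasDerivAt (fun x : ℝ => (1/2) * Real.log (1 - x))
      ((1/2) * ((1-q)⁻¹ * (-1))) q :=
    ((Real.hasDerivAt_log (ne_of_gt h1q)).comp q hin).const_mul (1/2)
  have t1 : HasDerivAt (fun x : ℝ => (p:ℝ) * ((1 - x) * x ^ (p-1)))
      ((p:ℝ) * ((-1) * q ^ (p-1) + (1 - q) * (((p-1 : ℕ):ℝ) * q ^ (p-1-1)))) q :=
    (hin.mul (hasDerivAt_pow (p-1) q)).const_mul (p:ℝ)
  have t2 : HasDerivAt (fun x : ℝ => x ^ p) ((p:ℝ) * q ^ (p-1)) q := hasDerivAt_pow p q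
  have h3 : HasDerivAt (fun x : ℝ => β^2/2 * (1 - (p:ℝ) * ((1 - x) * x ^ (p-1)) - x ^ p))
      (β^2/2 * (0 - (p:ℝ) * ((-1) * q ^ (p-1) + (1 - q) * (((p-1 : ℕ):ℝ) * q ^ (p-1-1)))
        - (p:ℝ) * q ^ (p-1))) q :=
    (((hasDerivAt_const q (1:ℝ)).sub t1).sub t2).const_mul (β^2/2)
  have hfe : f = fun x : ℝ => β * x ^ ((p:ℝ)/2) * E + (1/2) * Real.log (1 - x)
      + β^2/2 * (1 - (p:ℝ) * ((1 - x) * x ^ (p-1)) - x ^ p) := by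
    funext x; rw [hf x]; ring
  have hderiv : deriv f q
      = β * ((p:ℝ)/2 * q ^ ((p:ℝ)/2 - 1)) * E + (1/2) * ((1-q)⁻¹ * (-1))
        + (β^2/2 * (0 - (p:ℝ) * ((-1) * q ^ (p-1) + (1 - q) * (((p-1 : ℕ):ℝ) * q ^ (p-1-1)))
          - (p:ℝ) * q ^ (p-1))) := by
    rw [hfe]; exact ((h1.add h2).add h3).deriv
  -- simplify powers
  have hpow1 : q ^ ((p:ℝ)/2 - 1) = c := by
    rw [hc]; congr 1; ring
  have hpow2 : q ^ (p - 2) = c^2 := by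
    rw [hc, ← Real.rpow_natCast (q ^ (((p:ℝ)-2)/2)) 2, ← Real.rpow_mul hq0.le,
      ← Real.rpow_natCast q (p-2)]
    congr 1
    push_cast [Nat.cast_sub (by omega : 2 ≤ p)]
    ring
  have hsub1 : p - 1 - 1 = p - 2 := by omega
  have hcast1 : ((p - 1 : ℕ) : ℝ) = (p:ℝ) - 1 := by
    push_cast [Nat.cast_sub (by omega : 1 ≤ p)]; ring
  have hβ₂' : Real.sqrt 2 * β₂ q = s * A := by
    rw [hβ₂ q, hA, hs, ← hc]
    rw [show Real.sqrt 2 * (β * Real.sqrt ((p:ℝ) * ((p:ℝ) - 1) / 2) * (1 - q) * c)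
      = (Real.sqrt 2 * Real.sqrt ((p:ℝ) * ((p:ℝ) - 1) / 2)) * (β * (1 - q) * c) by ring]
    rw [← Real.sqrt_mul (by norm_num)]
    congr 2
    ring
  have hEinf' : Einf = 2 * s / p := by
    rw [hEinf, hs]
    rw [show ((p:ℝ)-1)/(p:ℝ) = ((p:ℝ) * ((p:ℝ)-1)) / (p:ℝ)^2 by field_simp]
    rw [Real.sqrt_div (by nlinarith) ((p:ℝ)^2), Real.sqrt_sq hppos.le]
    ring
  clear_value c s A
  have hD : deriv f q = (E * p * A - 1 - (p:ℝ) * ((p:ℝ)-1) * A^2) / (2*(1-q)) := by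
    rw [hderiv, hpow1, hsub1, hpow2, hcast1, hA]
    field_simp
    ring
  have key : deriv f q = 0 ↔ E * (p:ℝ) * A = 1 + (p:ℝ) * ((p:ℝ)-1) * A^2 := by
    rw [hD, div_eq_zero_iff]
    constructor
    · rintro (h | h)
      · linarith
      · exfalso; linarith
    · intro h; left; linarith
  have hhalf : (1/2) * (1/(s*A) + s*A) = (1 + (p:ℝ)*((p:ℝ)-1)*A^2) / (2*(s*A)) := by
    rw [← hs2]
    field_simp
  have hE2 : E / (2*s/(p:ℝ)) = (E*(p:ℝ)*A) / (2*(s*A)) := by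
    field_simp
  rw [key, hEinf', hβ₂', hhalf, hE2, div_eq_div_iff (by positivity) (by positivity)]
  constructor
  · intro h
    rw [h]
  · intro h
    exact mul_right_cancel₀ (by positivity) h
end

section
/- If E < E_∞ = 2 sqrt((p−1)/p), then the function q ↦ f(E,q) = β q^{p/2} E + (1/2)log(1−q) + (β²/2)(1 − p(1−q)q^{p−1} − q^p) is strictly decreasing on (0,1) and has no critical points there. -/
-- derivative computation lemma
lemma aux_deriv (p : ℕ) (hp : 3 ≤ p) (β E : ℝ)
    (f : ℝ → ℝ)
    (hf : ∀ q, f q = β * q ^ ((p : ℝ) / 2) * E + (1 / 2) * Real.log (1 - q)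
        + β ^ 2 / 2 * (1 - (p : ℝ) * (1 - q) * q ^ (p - 1) - q ^ p))
    (q : ℝ) (hq0 : 0 < q) (hq1 : q < 1) :
    HasDerivAt f (β * E * ((p : ℝ) / 2) * q ^ ((p : ℝ) / 2 - 1) - 1 / (2 * (1 - q))
      - β ^ 2 / 2 * (p : ℝ) * ((p : ℝ) - 1) * (1 - q) * q ^ (p - 2)) q := by
  have h1q : (0:ℝ) < 1 - q := by linarith
  have hne : (1:ℝ) - q ≠ 0 := ne_of_gt h1q
  have hinner : HasDerivAt (fun x : ℝ => 1 - x) (-1) q := (hasDerivAt_id q).const_sub 1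
  have h1 : HasDerivAt (fun x : ℝ => β * x ^ ((p : ℝ) / 2) * E)
      (β * ((p : ℝ) / 2 * q ^ ((p : ℝ) / 2 - 1)) * E) q :=
    ((Real.hasDerivAt_rpow_const (Or.inl hq0.ne')).const_mul β).mul_const E
  have h2 : HasDerivAt (fun x : ℝ => (1/2 : ℝ) * Real.log (1 - x))
      ((1/2 : ℝ) * ((1 - q)⁻¹ * -1)) q :=
    ((Real.hasDerivAt_log hne).comp q hinner).const_mul (1/2 : ℝ)
  have hA : HasDerivAt (fun x : ℝ => x ^ (p - 1)) ((↑(p-1) : ℝ) * q ^ (p - 2)) q := by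
    have := hasDerivAt_pow (p - 1) q
    rwa [show p - 1 - 1 = p - 2 from by omega] at this
  have hB : HasDerivAt (fun x : ℝ => (1 - x) * x ^ (p - 1))
      ((-1) * q ^ (p - 1) + (1 - q) * ((↑(p-1) : ℝ) * q ^ (p - 2))) q := hinner.mul hA
  have h3 : HasDerivAt (fun x : ℝ => β ^ 2 / 2 * (1 - (p : ℝ) * ((1 - x) * x ^ (p - 1)) - x ^ p))
      (β ^ 2 / 2 * ((0 - (p : ℝ) * ((-1) * q ^ (p - 1) + (1 - q) * ((↑(p-1) : ℝ) * q ^ (p - 2))))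
        - (p : ℝ) * q ^ (p - 1))) q :=
    (((hasDerivAt_const q (1:ℝ)).sub (hB.const_mul (p : ℝ))).sub (hasDerivAt_pow p q)).const_mul _
  have hsum := (h1.add h2).add h3
  have hfeq : f = fun x : ℝ => β * x ^ ((p : ℝ) / 2) * E + (1/2 : ℝ) * Real.log (1 - x)
      + β ^ 2 / 2 * (1 - (p : ℝ) * ((1 - x) * x ^ (p - 1)) - x ^ p) := by
    funext x; rw [hf x]; ring
  rw [hfeq]
  refine HasDerivAt.congr_deriv hsum ?_
  have hc : (↑(p-1) : ℝ) = (p : ℝ) - 1 := by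
    push_cast [Nat.cast_sub (by omega : 1 ≤ p)]; ring
  rw [hc]
  field_simp
  ring

lemma aux_neg (p : ℕ) (hp : 3 ≤ p) (β E : ℝ) (hβ : 0 < β)
    (hE : E < 2 * Real.sqrt (((p : ℝ) - 1) / p))
    (q : ℝ) (hq0 : 0 < q) (hq1 : q < 1) :
    β * E * ((p : ℝ) / 2) * q ^ ((p : ℝ) / 2 - 1) - 1 / (2 * (1 - q))
      - β ^ 2 / 2 * (p : ℝ) * ((p : ℝ) - 1) * (1 - q) * q ^ (p - 2) < 0 := by
  have hp3 : (3:ℝ) ≤ (p : ℝ) := by exact_mod_cast hp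
  have hppos : (0:ℝ) < (p : ℝ) := by linarith
  have h1q : (0:ℝ) < 1 - q := by linarith
  set s := Real.sqrt (((p : ℝ) - 1) / p) with hs
  have hsnn : 0 ≤ s := Real.sqrt_nonneg _
  have hs2 : s ^ 2 = ((p : ℝ) - 1) / p := Real.sq_sqrt (div_nonneg (by linarith) (by linarith))
  have hw2 : ((p : ℝ) * s) ^ 2 = (p : ℝ) * ((p : ℝ) - 1) := by
    rw [mul_pow, hs2]; field_simp
  set u := q ^ ((p : ℝ) / 2 - 1) with hu
  have hupos : 0 < u := Real.rpow_pos_of_pos hq0 _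
  have huu : u * u = q ^ (p - 2) := by
    rw [hu, ← Real.rpow_add hq0]
    rw [show ((p : ℝ) / 2 - 1) + ((p : ℝ) / 2 - 1) = ((p - 2 : ℕ) : ℝ) by
      push_cast [Nat.cast_sub (by omega : 2 ≤ p)]; ring]
    exact Real.rpow_natCast q (p - 2)
  set X := (1 - q) * u with hX
  have hXpos : 0 < X := mul_pos h1q hupos
  have hkey : 2 * β * ((p : ℝ) * s) * X ≤ 1 + β ^ 2 * ((p : ℝ) * ((p : ℝ) - 1)) * X ^ 2 := by
    nlinarith [sq_nonneg (1 - β * ((p : ℝ) * s) * X), hw2, sq_nonneg (β * X)]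
  rw [← huu]
  have h2q : (0:ℝ) < 2 * (1 - q) := by linarith
  have hrhs : (1 / (2 * (1 - q)) + β ^ 2 / 2 * (p : ℝ) * ((p : ℝ) - 1) * (1 - q) * (u * u))
      * (2 * (1 - q)) = 1 + β ^ 2 * ((p : ℝ) * ((p : ℝ) - 1)) * X ^ 2 := by
    field_simp [hX]; ring
  have hlhs : β * E * ((p : ℝ) / 2) * u * (2 * (1 - q)) = β * E * (p : ℝ) * X := by
    rw [hX]; ring
  have hEstep : β * E * (p : ℝ) * X < 2 * β * ((p : ℝ) * s) * X := by
    nlinarith [mul_pos (mul_pos hβ hppos) hXpos]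
  have hlt : β * E * ((p : ℝ) / 2) * u * (2 * (1 - q))
      < (1 / (2 * (1 - q)) + β ^ 2 / 2 * (p : ℝ) * ((p : ℝ) - 1) * (1 - q) * (u * u)) * (2 * (1 - q)) := by
    rw [hrhs, hlhs]; linarith
  have := lt_of_mul_lt_mul_right (by linarith [hlt] : β * E * ((p : ℝ) / 2) * u * (2 * (1 - q))
      < (1 / (2 * (1 - q)) + β ^ 2 / 2 * (p : ℝ) * ((p : ℝ) - 1) * (1 - q) * (u * u)) * (2 * (1 - q)))
      (le_of_lt h2q)
  linarith

theorem stmt_10 (p : ℕ) (hp : 3 ≤ p) (β E : ℝ) (hβ : 0 < β)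
    (Einf : ℝ) (hEinf : Einf = 2 * Real.sqrt (((p : ℝ) - 1) / p))
    (hE : E < Einf)
    (f : ℝ → ℝ)
    (hf : ∀ q, f q = β * q ^ ((p : ℝ) / 2) * E + (1 / 2) * Real.log (1 - q)
        + β ^ 2 / 2 * (1 - (p : ℝ) * (1 - q) * q ^ (p - 1) - q ^ p)) :
    StrictAntiOn f (Set.Ioo (0 : ℝ) 1) ∧
    ∀ q ∈ Set.Ioo (0 : ℝ) 1, deriv f q ≠ 0 := by
  have hE' : E < 2 * Real.sqrt (((p : ℝ) - 1) / p) := hEinf ▸ hE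
  have hderiv : ∀ q ∈ Set.Ioo (0:ℝ) 1, deriv f q < 0 := by
    intro q hq
    obtain ⟨hq0, hq1⟩ := hq
    rw [(aux_deriv p hp β E f hf q hq0 hq1).deriv]
    exact aux_neg p hp β E hβ hE' q hq0 hq1
  constructor
  · apply strictAntiOn_of_deriv_neg (convex_Ioo 0 1)
    · intro q hq
      exact ((aux_deriv p hp β E f hf q hq.1 hq.2).differentiableAt).continuousAt.continuousWithinAt
    · intro q hq
      rw [interior_Ioo] at hq
      exact hderiv q hq
  · intro q hq
    exact ne_of_lt (hderiv q hq)
end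

section
/- Let p ≥ 3, β > 0 and let q ∈ (0,1), E ∈ ℝ satisfy ∂_q f(E,q) = 0, where f(E,q) = β q^{p/2}E + (1/2)log(1−q) + (β²/2)(1 − p(1−q)q^{p−1} − q^p). Then the second derivative factors as ∂²_q f(E,q) = (p / (4 q (1−q)²)) · (q − (p−2)/p) · (2 β₂(q)² − 1), where β₂(q) = β sqrt(p(p−1)/2)(1−q)q^{(p−2)/2}. -/
theorem stmt_11 (p : ℕ) (hp : 3 ≤ p) (β E : ℝ) (hβ : 0 < β)
    (f : ℝ → ℝ)
    (hf : ∀ q, f q = β * q ^ ((p : ℝ) / 2) * E + (1 / 2) * Real.log (1 - q)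
        + β ^ 2 / 2 * (1 - (p : ℝ) * (1 - q) * q ^ (p - 1) - q ^ p))
    (β₂ : ℝ → ℝ)
    (hβ₂ : ∀ q, β₂ q = β * Real.sqrt ((p : ℝ) * ((p : ℝ) - 1) / 2) * (1 - q)
        * q ^ (((p : ℝ) - 2) / 2))
    (q : ℝ) (hq : q ∈ Set.Ioo (0 : ℝ) 1)
    (hcrit : deriv f q = 0) :
    deriv (deriv f) q
      = (p : ℝ) / (4 * q * (1 - q) ^ 2) * (q - ((p : ℝ) - 2) / p)
        * (2 * (β₂ q) ^ 2 - 1) := by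
  obtain ⟨hq0, hq1⟩ := hq
  have h1q : (0:ℝ) < 1 - q := by linarith
  obtain ⟨m, rfl⟩ : ∃ m, p = m + 3 := ⟨p - 3, by omega⟩
  set P : ℝ := (m:ℝ) + 3 with hP
  have hPcast : ((m + 3 : ℕ) : ℝ) = P := by push_cast [hP]; ring
  have hm0 : (0:ℝ) ≤ (m:ℝ) := Nat.cast_nonneg m
  have hP3 : (3:ℝ) ≤ P := by rw [hP]; linarith
  have e1 : m + 3 - 1 = m + 2 := by omega
  -- normalized form of f
  have hf2 : ∀ y : ℝ, f y = β * y ^ (P/2) * E + 1/2 * Real.log (1-y)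
      + β^2/2 * (1 - P*(1-y)*y^(m+2) - y^(m+3)) := by
    intro y
    rw [hf, e1, hPcast]
  -- first derivative
  set g : ℝ → ℝ := fun x => β*E*(P/2 * x ^ (P/2 - 1)) - 1/2 * (1-x)⁻¹
      - β^2/2 * (P*(P-1)*((1-x)*x^(m+1))) with hg_def
  have hg : ∀ x ∈ Set.Ioo (0:ℝ) 1, HasDerivAt f (g x) x := by
    intro x hx
    obtain ⟨hx0, hx1⟩ := hx
    have h1x : (1:ℝ) - x ≠ 0 := by intro h; nlinarith
    have hA : HasDerivAt (fun y : ℝ => β * y ^ (P/2) * E)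
        (β * (P/2 * x ^ (P/2-1)) * E) x := by
      have h := Real.hasDerivAt_rpow_const (x := x) (p := P/2) (Or.inl (ne_of_gt hx0))
      exact (h.const_mul β).mul_const E
    have h1mx : HasDerivAt (fun y : ℝ => 1 - y) (0 - 1) x :=
      (hasDerivAt_const x (1:ℝ)).sub (hasDerivAt_id x)
    have hB : HasDerivAt (fun y : ℝ => 1/2 * Real.log (1 - y))
        (1/2 * ((1-x)⁻¹ * (0 - 1))) x :=
      (((Real.hasDerivAt_log h1x).comp x h1mx)).const_mul (1/2)
    have hpow2 : HasDerivAt (fun y : ℝ => y^(m+2)) (((m:ℝ)+2) * x^(m+1)) x := by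
      have := hasDerivAt_pow (m+2) x
      simpa using this
    have hpow3 : HasDerivAt (fun y : ℝ => y^(m+3)) (((m:ℝ)+3) * x^(m+2)) x := by
      have := hasDerivAt_pow (m+3) x
      simpa using this
    have hC : HasDerivAt (fun y : ℝ => β^2/2 * (1 - P*(1-y)*y^(m+2) - y^(m+3)))
        (β^2/2 * (0 - ((P*(0-1))*x^(m+2) + (P*(1-x))*(((m:ℝ)+2) * x^(m+1)))
          - ((m:ℝ)+3) * x^(m+2))) x := by
      have hmul : HasDerivAt (fun y : ℝ => (P*(1-y))*y^(m+2))
          ((P*(0-1))*x^(m+2) + (P*(1-x))*(((m:ℝ)+2) * x^(m+1))) x :=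
        (h1mx.const_mul P).mul hpow2
      have := (((hasDerivAt_const x (1:ℝ)).sub hmul).sub hpow3).const_mul (β^2/2)
      simpa using this
    have htot : HasDerivAt (fun y : ℝ => β * y ^ (P/2) * E + 1/2 * Real.log (1-y)
        + β^2/2 * (1 - P*(1-y)*y^(m+2) - y^(m+3))) _ x := (hA.add hB).add hC
    have heq : (fun y : ℝ => β * y ^ (P/2) * E + 1/2 * Real.log (1-y)
        + β^2/2 * (1 - P*(1-y)*y^(m+2) - y^(m+3))) = f := by
      funext y; rw [hf2]
    rw [heq] at htot
    convert htot using 1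
    rw [hg_def]
    have hx2 : x^(m+2) = x^(m+1) * x := by ring
    field_simp
    ring
  -- second derivative of g at q
  have hq0' : q ≠ 0 := ne_of_gt hq0
  have h1q' : (1:ℝ) - q ≠ 0 := ne_of_gt h1q
  set D : ℝ := β*E*(P/2 * ((P/2-1) * q ^ (P/2 - 2))) - 1/2 * (-(0-1)/(1-q)^2)
      - β^2/2 * (P*(P-1)*((0-1)*q^(m+1) + (1-q)*(((m:ℝ)+1)*q^m))) with hD_def
  have hg' : HasDerivAt g D q := by
    have h1mx : HasDerivAt (fun y : ℝ => 1 - y) (0 - 1) q :=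
      (hasDerivAt_const q (1:ℝ)).sub (hasDerivAt_id q)
    have hA : HasDerivAt (fun x : ℝ => β*E*(P/2 * x ^ (P/2 - 1)))
        (β*E*(P/2 * ((P/2-1) * q ^ (P/2 - 2)))) q := by
      have h := Real.hasDerivAt_rpow_const (x := q) (p := P/2 - 1) (Or.inl hq0')
      have h2 : P/2 - 1 - 1 = P/2 - 2 := by ring
      rw [h2] at h
      exact (h.const_mul (P/2)).const_mul (β*E)
    have hB : HasDerivAt (fun x : ℝ => 1/2 * (1-x)⁻¹) (1/2 * (-(0-1)/(1-q)^2)) q :=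
      (h1mx.inv h1q').const_mul (1/2)
    have hpow1 : HasDerivAt (fun y : ℝ => y^(m+1)) (((m:ℝ)+1) * q^m) q := by
      have := hasDerivAt_pow (m+1) q
      simpa using this
    have hC : HasDerivAt (fun x : ℝ => β^2/2 * (P*(P-1)*((1-x)*x^(m+1))))
        (β^2/2 * (P*(P-1)*((0-1)*q^(m+1) + (1-q)*(((m:ℝ)+1)*q^m)))) q :=
      ((h1mx.mul hpow1).const_mul (P*(P-1))).const_mul (β^2/2)
    exact (hA.sub hB).sub hC
  -- identify derivatives
  have hfg : deriv f =ᶠ[nhds q] g := by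
    filter_upwards [isOpen_Ioo.mem_nhds (⟨hq0, hq1⟩ : q ∈ Set.Ioo (0:ℝ) 1)] with x hx
    exact (hg x hx).deriv
  have key : deriv (deriv f) q = D := by
    rw [hfg.deriv_eq]
    exact hg'.deriv
  -- criticality
  have hcrit' : g q = 0 := by
    rw [← (hg q ⟨hq0, hq1⟩).deriv]; exact hcrit
  rw [key]
  -- rewrite the rpow pieces
  set X : ℝ := q ^ (P/2 - 1) with hX_def
  have hXpos : 0 < X := Real.rpow_pos_of_pos hq0 _
  have hXq : q ^ (P/2 - 2) = X / q := by
    rw [eq_div_iff hq0', hX_def, ← Real.rpow_add_one hq0']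
    congr 1; ring
  have hb2 : (β₂ q)^2 = β^2 * (P * (P-1)/2) * (1-q)^2 * q^(m+1) := by
    rw [hβ₂, hPcast]
    have hs : Real.sqrt (P*(P-1)/2) ^ 2 = P*(P-1)/2 :=
      Real.sq_sqrt (by nlinarith)
    have hqq : (q ^ ((P - 2)/2)) ^ 2 = q ^ (m+1) := by
      rw [sq, ← Real.rpow_add hq0, ← Real.rpow_natCast q (m+1)]
      congr 1; push_cast [hP]; ring
    calc (β * Real.sqrt (P*(P-1)/2) * (1-q) * q ^ ((P-2)/2))^2
        = β^2 * (Real.sqrt (P*(P-1)/2))^2 * (1-q)^2 * (q ^ ((P-2)/2))^2 := by ring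
      _ = β^2 * (P*(P-1)/2) * (1-q)^2 * q^(m+1) := by rw [hs, hqq]
  -- solve for E from the criticality condition
  rw [hg_def] at hcrit'
  simp only [hX_def] at hcrit' ⊢
  have hE : E = (1/2 * (1-q)⁻¹ + β^2/2 * (P*(P-1)*((1-q)*q^(m+1)))) / (β * (P/2 * X)) := by
    rw [eq_div_iff (by positivity)]
    linear_combination hcrit'
  rw [hD_def, hXq, hb2, hE, hPcast]
  have hq2 : q^(m+2) = q^(m+1) * q := by ring
  have hq1' : q^(m+1) = q^m * q := by ring
  field_simp
  ring
end

section
/- Let p ≥ 3 and define φ(r) = −(1/2)log(1+r) + (2/p)r − r/(2(p−1)) − r²/(2p(p−1)) − (p−2)/p + (1/2)log(p−1) for r ≥ p−2. Then φ(p−2) = 0, φ'(p−2) = 0, φ''(r) < 0 for all r ≥ p−2, and consequently φ(r) ≤ 0 for all r ≥ p−2 with equality only at r = p−2. -/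
set_option maxHeartbeats 1000000


theorem stmt_18 (p : ℕ) (hp : 3 ≤ p)
    (φ : ℝ → ℝ)
    (hφ : ∀ r, φ r = -(1 / 2) * Real.log (1 + r) + (2 / p) * r
        - r / (2 * ((p : ℝ) - 1)) - r ^ 2 / (2 * (p : ℝ) * ((p : ℝ) - 1))
        - ((p : ℝ) - 2) / p + (1 / 2) * Real.log ((p : ℝ) - 1)) :
    φ ((p : ℝ) - 2) = 0 ∧
    deriv φ ((p : ℝ) - 2) = 0 ∧
    (∀ r : ℝ, (p : ℝ) - 2 ≤ r → deriv (deriv φ) r < 0) ∧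
    (∀ r : ℝ, (p : ℝ) - 2 ≤ r → φ r ≤ 0 ∧ (φ r = 0 → r = (p : ℝ) - 2)) := by
  have hP : (3:ℝ) ≤ (p:ℝ) := by exact_mod_cast hp
  set P : ℝ := (p:ℝ) with hPdef
  clear_value P
  have hP0 : P ≠ 0 := by linarith
  have hP1 : P - 1 ≠ 0 := by linarith
  have hφf : φ = fun r => -(1 / 2) * Real.log (1 + r) + (2 / P) * r
      - r / (2 * (P - 1)) - r ^ 2 / (2 * P * (P - 1))
      - (P - 2) / P + (1 / 2) * Real.log (P - 1) := funext hφ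
  set φ' : ℝ → ℝ := fun r =>
    -(1/2) * (1 + r)⁻¹ + 2/P - 1/(2*(P-1)) - 2*r/(2*P*(P-1)) with hφ'def
  set φ'' : ℝ → ℝ := fun r =>
    (1/2) * ((1 + r)^2)⁻¹ - 2/(2*P*(P-1)) with hφ''def
  -- first derivative
  have hder : ∀ r : ℝ, -1 < r → HasDerivAt φ (φ' r) r := by
    intro r hr
    have h1r : (1:ℝ) + r ≠ 0 := by linarith
    have h1 : HasDerivAt (fun x : ℝ => 1 + x) 1 r := by
      simpa using (hasDerivAt_id r).const_add 1
    have hlog : HasDerivAt (fun x : ℝ => Real.log (1 + x)) (1 / (1 + r)) r := by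
      simpa using h1.log h1r
    have hA : HasDerivAt (fun x : ℝ => -(1/2) * Real.log (1 + x))
        (-(1/2) * (1/(1+r))) r := hlog.const_mul _
    have hB : HasDerivAt (fun x : ℝ => (2/P) * x) (2/P) r := by
      simpa using (hasDerivAt_id r).const_mul (2/P)
    have hC : HasDerivAt (fun x : ℝ => x / (2*(P-1))) (1/(2*(P-1))) r := by
      simpa using (hasDerivAt_id r).div_const (2*(P-1))
    have hD : HasDerivAt (fun x : ℝ => x^2 / (2*P*(P-1))) (2*r/(2*P*(P-1))) r := by
      have := (hasDerivAt_pow 2 r).div_const (2*P*(P-1))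
      simpa using this
    have H := (((hA.add hB).sub hC).sub hD).sub_const ((P-2)/P)
    have H2 := H.add_const ((1/2) * Real.log (P-1))
    rw [hφf]
    refine H2.congr_deriv ?_
    simp [hφ'def, one_div]
  have hderiv : ∀ r : ℝ, -1 < r → deriv φ r = φ' r := fun r hr => (hder r hr).deriv
  -- second derivative
  have hder2 : ∀ r : ℝ, -1 < r → HasDerivAt φ' (φ'' r) r := by
    intro r hr
    have h1r : (1:ℝ) + r ≠ 0 := by linarith
    have h1 : HasDerivAt (fun x : ℝ => 1 + x) 1 r := by
      simpa using (hasDerivAt_id r).const_add 1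
    have hinv : HasDerivAt (fun x : ℝ => (1 + x)⁻¹) (-1 / (1+r)^2) r := by
      simpa [Pi.inv_def] using h1.inv h1r
    have hA : HasDerivAt (fun x : ℝ => -(1/2) * (1 + x)⁻¹)
        (-(1/2) * (-1/(1+r)^2)) r := hinv.const_mul _
    have hB : HasDerivAt (fun x : ℝ => 2*x / (2*P*(P-1))) (2/(2*P*(P-1))) r := by
      have := ((hasDerivAt_id r).const_mul 2).div_const (2*P*(P-1))
      simpa using this
    have H := ((hA.add_const (2/P)).sub_const (1/(2*(P-1)))).sub hB
    refine H.congr_deriv ?_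
    simp only [hφ''def]
    ring
  -- φ'' negative on Ici (P-2)
  have hφ''neg : ∀ r : ℝ, P - 2 ≤ r → φ'' r < 0 := by
    intro r hr
    have h1r : (0:ℝ) < 1 + r := by linarith
    have hpp : (0:ℝ) < P * (P - 1) := by nlinarith
    have heq : φ'' r = (P*(P-1) - 2*(1+r)^2) / (2*(1+r)^2 * (P*(P-1))) := by
      simp only [hφ''def]
      field_simp
    rw [heq]
    apply div_neg_of_neg_of_pos
    · have h2 : P - 1 ≤ 1 + r := by linarith
      nlinarith [mul_le_mul h2 h2 (by linarith : (0:ℝ) ≤ P - 1) (by linarith : (0:ℝ) ≤ 1 + r)]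
    · have : (0:ℝ) < 2*(1+r)^2 := by positivity
      exact mul_pos this hpp
  -- φ' negative on Ioi (P-2)
  have hφ'neg : ∀ r : ℝ, P - 2 < r → φ' r < 0 := by
    intro r hr
    have h1r : (0:ℝ) < 1 + r := by linarith
    have hpp : (0:ℝ) < P * (P - 1) := by nlinarith
    have heq : φ' r = ((1+r)*(3*P-4-2*r) - P*(P-1)) / (2*P*(P-1)*(1+r)) := by
      simp only [hφ'def]
      field_simp
      ring
    rw [heq]
    apply div_neg_of_neg_of_pos
    · nlinarith [sq_nonneg (r - (P - 2)), mul_pos (show (0:ℝ) < r - (P-2) by linarith)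
        (show (0:ℝ) < P - 2 by linarith)]
    · exact mul_pos (by nlinarith : (0:ℝ) < 2*P*(P-1)) h1r
  have hmem : ∀ r : ℝ, P - 2 ≤ r → (-1:ℝ) < r := fun r hr => by linarith
  -- φ(P-2) = 0
  have hval : φ (P - 2) = 0 := by
    have key : (2/P)*(P-2) - (P-2)/(2*(P-1)) - (P-2)^2/(2*P*(P-1)) - (P-2)/P = 0 := by
      field_simp
      ring
    rw [hφ, show (1:ℝ) + (P - 2) = P - 1 by ring]
    linarith [key]
  have hval' : φ' (P - 2) = 0 := by
    simp only [hφ'def]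
    have h1r : (1:ℝ) + (P - 2) ≠ 0 := by linarith
    field_simp
    ring
  refine ⟨hval, ?_, ?_, ?_⟩
  · rw [hderiv _ (hmem _ le_rfl), hval']
  · intro r hr
    have hev : deriv φ =ᶠ[nhds r] φ' := by
      filter_upwards [isOpen_Ioi.mem_nhds (show (-1:ℝ) < r from hmem r hr)] with x hx
      exact hderiv x hx
    rw [hev.deriv_eq, (hder2 r (hmem r hr)).deriv]
    exact hφ''neg r hr
  · -- φ strictly decreasing on Ici (P-2)
    have hanti : StrictAntiOn φ (Set.Ici (P - 2)) := by
      apply strictAntiOn_of_deriv_neg (convex_Ici _)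
      · intro x hx
        exact ((hder x (hmem x hx)).differentiableAt).continuousAt.continuousWithinAt
      · intro x hx
        rw [interior_Ici] at hx
        rw [hderiv x (hmem x (le_of_lt hx))]
        exact hφ'neg x hx
    intro r hr
    rcases eq_or_lt_of_le hr with h | h
    · rw [← h, hval]
      exact ⟨le_rfl, fun _ => rfl⟩
    · have := hanti (Set.self_mem_Ici) (Set.mem_Ici.mpr hr) h
      rw [hval] at this
      exact ⟨le_of_lt this, fun h0 => absurd h0 (ne_of_lt this)⟩
end

section
/- Let p ≥ 3 and β > β_d = sqrt((p−1)^{p−1}/(p(p−2)^{p−2})). The equation (1−q)q^{p−2} = 1/(pβ²) has exactly two solutions in (0,1), one in (0,(p−2)/(p−1)) and one in ((p−2)/(p−1),1); moreover this equation is equivalent to 2β₂(q)² = (p−1)(1−q), where β₂(q) = β sqrt(p(p−1)/2)(1−q)q^{(p−2)/2}, and the solution in ((p−2)/(p−1),1) is strictly increasing as a function of β. -/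
open Set

private lemma gpoly_hasDerivAt (m : ℕ) (q : ℝ) :
    HasDerivAt (fun q : ℝ => (1 - q) * q ^ (m + 1))
      (q ^ m * (((m : ℝ) + 1) - ((m : ℝ) + 2) * q)) q := by
  have h : HasDerivAt (fun x : ℝ => (1 - x) * x ^ (m + 1)) _ q :=
    ((hasDerivAt_id' q).const_sub 1).mul (hasDerivAt_pow (m + 1) q)
  convert h using 1
  simp only [Nat.add_sub_cancel, id_eq, id]
  push_cast
  ring

private lemma gpoly_mono (m : ℕ) :
    StrictMonoOn (fun q : ℝ => (1 - q) * q ^ (m + 1))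
      (Icc 0 (((m : ℝ) + 1) / ((m : ℝ) + 2))) := by
  apply strictMonoOn_of_deriv_pos (convex_Icc _ _)
  · fun_prop
  · intro x hx
    rw [interior_Icc, mem_Ioo] at hx
    rw [(gpoly_hasDerivAt m x).deriv]
    have h1 : (0:ℝ) < x ^ m := pow_pos hx.1 m
    have h2 : x * ((m : ℝ) + 2) < (m : ℝ) + 1 :=
      (lt_div_iff₀ (by positivity)).mp hx.2
    nlinarith

private lemma gpoly_anti (m : ℕ) :
    StrictAntiOn (fun q : ℝ => (1 - q) * q ^ (m + 1))
      (Icc (((m : ℝ) + 1) / ((m : ℝ) + 2)) 1) := by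
  apply strictAntiOn_of_deriv_neg (convex_Icc _ _)
  · fun_prop
  · intro x hx
    rw [interior_Icc, mem_Ioo] at hx
    rw [(gpoly_hasDerivAt m x).deriv]
    have hc : (0:ℝ) < ((m : ℝ) + 1) / ((m : ℝ) + 2) := by positivity
    have h1 : (0:ℝ) < x ^ m := pow_pos (hc.trans hx.1) m
    have h2 : (m : ℝ) + 1 < x * ((m : ℝ) + 2) :=
      (div_lt_iff₀ (by positivity)).mp hx.1
    nlinarith

set_option maxHeartbeats 800000 in


theorem stmt_19 (p : ℕ) (hp : 3 ≤ p)
    (βd : ℝ)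
    (hβd : βd = Real.sqrt (((p : ℝ) - 1) ^ (p - 1) / ((p : ℝ) * ((p : ℝ) - 2) ^ (p - 2)))) :
    (∀ β : ℝ, βd < β →
      (∃ q₁ ∈ Set.Ioo (0 : ℝ) (((p : ℝ) - 2) / ((p : ℝ) - 1)),
        ∃ q₂ ∈ Set.Ioo (((p : ℝ) - 2) / ((p : ℝ) - 1)) 1,
          {q ∈ Set.Ioo (0 : ℝ) 1 | (1 - q) * q ^ (p - 2) = 1 / ((p : ℝ) * β ^ 2)}
            = {q₁, q₂}) ∧
      (∀ q ∈ Set.Ioo (0 : ℝ) 1,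
        ((1 - q) * q ^ (p - 2) = 1 / ((p : ℝ) * β ^ 2) ↔
          2 * (β * Real.sqrt ((p : ℝ) * ((p : ℝ) - 1) / 2) * (1 - q)
              * q ^ (((p : ℝ) - 2) / 2)) ^ 2 = ((p : ℝ) - 1) * (1 - q)))) ∧
    (∀ β β' : ℝ, βd < β → β < β' →
      ∀ q q' : ℝ, q ∈ Set.Ioo (((p : ℝ) - 2) / ((p : ℝ) - 1)) 1 →
        q' ∈ Set.Ioo (((p : ℝ) - 2) / ((p : ℝ) - 1)) 1 →
        (1 - q) * q ^ (p - 2) = 1 / ((p : ℝ) * β ^ 2) →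
        (1 - q') * q' ^ (p - 2) = 1 / ((p : ℝ) * β' ^ 2) →
        q < q') := by
  obtain ⟨m, rfl⟩ : ∃ m, p = m + 3 := ⟨p - 3, by omega⟩
  simp only [show m + 3 - 2 = m + 1 from by omega, show m + 3 - 1 = m + 2 from by omega] at hβd ⊢
  push_cast at hβd ⊢
  simp only [show (m:ℝ) + 3 - 2 = (m:ℝ) + 1 from by ring,
    show (m:ℝ) + 3 - 1 = (m:ℝ) + 2 from by ring] at hβd ⊢
  have gmono := gpoly_mono m
  have ganti := gpoly_anti m

  set g : ℝ → ℝ := fun q => (1 - q) * q ^ (m + 1) with hg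
  set c : ℝ := ((m:ℝ) + 1) / ((m:ℝ) + 2) with hc
  have hc0 : (0:ℝ) < c := by positivity
  have hc1 : c < 1 := by
    rw [hc, div_lt_one (by positivity)]; linarith
  have hβd2 : βd ^ 2 * (((m:ℝ) + 3) * ((m:ℝ) + 1) ^ (m + 1)) = ((m:ℝ) + 2) ^ (m + 2) := by
    rw [hβd, Real.sq_sqrt (by positivity)]
    field_simp
  have hβd0 : 0 < βd := by rw [hβd]; positivity
  have hgc : g c = ((m:ℝ) + 1) ^ (m + 1) / ((m:ℝ) + 2) ^ (m + 2) := by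
    show (1 - c) * c ^ (m + 1) = _
    rw [hc, div_pow]
    field_simp
    ring
  -- key: for βd < β, 1/((m+3)β²) < g c
  have key : ∀ β : ℝ, βd < β → 1 / (((m:ℝ) + 3) * β ^ 2) < g c := by
    intro β hβ
    have hβ0 : 0 < β := hβd0.trans hβ
    have hsq : βd ^ 2 < β ^ 2 := by nlinarith
    rw [hgc, div_lt_div_iff₀ (by positivity) (by positivity)]
    nlinarith [pow_pos (show (0:ℝ) < (m:ℝ)+1 by positivity) (m+1),
      mul_lt_mul_of_pos_right hsq (show (0:ℝ) < ((m:ℝ) + 3) * ((m:ℝ) + 1) ^ (m + 1) by positivity)]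
  constructor
  · intro β hβ
    have hβ0 : 0 < β := hβd0.trans hβ
    have ht0 : 0 < 1 / (((m:ℝ) + 3) * β ^ 2) := by positivity
    have htc := key β hβ
    constructor
    · -- existence and uniqueness
      have hcont : Continuous g := by fun_prop
      have h1 : (1 / (((m:ℝ) + 3) * β ^ 2)) ∈ Ioo (g 0) (g c) := by
        constructor
        · simpa [hg] using ht0
        · exact htc
      obtain ⟨q₁, hq₁m, hq₁⟩ := intermediate_value_Ioo hc0.le hcont.continuousOn h1
      have h2 : (1 / (((m:ℝ) + 3) * β ^ 2)) ∈ Ioo (g 1) (g c) := by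
        constructor
        · simpa [hg] using ht0
        · exact htc
      obtain ⟨q₂, hq₂m, hq₂⟩ := intermediate_value_Ioo' hc1.le hcont.continuousOn h2
      refine ⟨q₁, hq₁m, q₂, hq₂m, ?_⟩
      ext x
      simp only [mem_setOf_eq, mem_insert_iff, mem_singleton_iff, mem_Ioo]
      constructor
      · rintro ⟨⟨hx0, hx1⟩, hx⟩
        rcases le_or_gt x c with hxc | hxc
        · left
          have hxc' : x ≠ c := by
            rintro rfl
            exact ne_of_gt htc hx
          refine gmono.injOn ⟨hx0.le, hxc⟩ ⟨hq₁m.1.le, hq₁m.2.le⟩ ?_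
          show (1 - x) * x ^ (m + 1) = (1 - q₁) * q₁ ^ (m + 1)
          exact hx.trans hq₁.symm
        · right
          refine ganti.injOn ⟨hxc.le, hx1.le⟩ ⟨hq₂m.1.le, hq₂m.2.le⟩ ?_
          show (1 - x) * x ^ (m + 1) = (1 - q₂) * q₂ ^ (m + 1)
          exact hx.trans hq₂.symm
      · rintro (rfl | rfl)
        · exact ⟨⟨hq₁m.1, hq₁m.2.trans hc1⟩, hq₁⟩
        · exact ⟨⟨hc0.trans hq₂m.1, hq₂m.2⟩, hq₂⟩
    · -- equivalence
      intro q hq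
      obtain ⟨hq0, hq1⟩ := hq
      have hs : (√(((m:ℝ) + 3) * ((m:ℝ) + 2) / 2)) ^ 2 = ((m:ℝ) + 3) * ((m:ℝ) + 2) / 2 :=
        Real.sq_sqrt (by positivity)
      have hr : (q ^ (((m:ℝ) + 1) / 2)) ^ 2 = q ^ (m + 1) := by
        rw [← Real.rpow_natCast (q ^ (((m:ℝ) + 1) / 2)) 2, ← Real.rpow_mul hq0.le]
        rw [show ((m:ℝ) + 1) / 2 * (2:ℕ) = ((m+1 : ℕ) : ℝ) by push_cast; ring]
        rw [Real.rpow_natCast]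
      have hne : ((m:ℝ) + 3) * β ^ 2 ≠ 0 := by positivity
      have h1q : (1:ℝ) - q ≠ 0 := by linarith
      constructor
      · intro h
        rw [eq_div_iff hne] at h
        rw [mul_pow, mul_pow, mul_pow, hs, hr]
        linear_combination (((m:ℝ) + 2) * (1 - q)) * h
      · intro h
        rw [mul_pow, mul_pow, mul_pow, hs, hr] at h
        rw [eq_div_iff hne]
        have h2 : (((m:ℝ) + 2) * (1 - q)) * ((1 - q) * q ^ (m + 1) * (((m:ℝ) + 3) * β ^ 2))
            = (((m:ℝ) + 2) * (1 - q)) * 1 := by linear_combination h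
        have h3 := mul_left_cancel₀ (mul_ne_zero (by positivity) h1q) h2
        linarith
  · intro β β' hβ hβ' q q' hq hq' he he'
    have hβ0 : 0 < β := hβd0.trans hβ
    have hlt : 1 / (((m:ℝ) + 3) * β' ^ 2) < 1 / (((m:ℝ) + 3) * β ^ 2) := by
      have hb2 : β ^ 2 < β' ^ 2 := by nlinarith [pow_lt_pow_left₀ hβ' hβ0.le (two_ne_zero)]
      apply one_div_lt_one_div_of_lt (by positivity)
      have := mul_lt_mul_of_pos_left hb2 (show (0:ℝ) < (m:ℝ) + 3 by positivity)
      linarith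
    have hgq : g q = 1 / (((m:ℝ) + 3) * β ^ 2) := he
    have hgq' : g q' = 1 / (((m:ℝ) + 3) * β' ^ 2) := he'
    by_contra hcon
    push_neg at hcon
    rcases eq_or_lt_of_le hcon with rfl | hlt2
    · rw [hgq] at hgq'; linarith
    · have := ganti ⟨hq'.1.le, hq'.2.le⟩ ⟨hq.1.le, hq.2.le⟩ hlt2
      rw [hgq, hgq'] at this
      linarith
end
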